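/- arXiv:2308.15021 — 3 statements merged into one kernel-verified Lean document; each statement's English description precedes it below -/
import Mathlib

section
/- Let G be a simple graph on vertex set {1,…,n}, let a ∈ ℕ^n and U = supp(a). A subset Z of the vertex set of the parallelization G^a is a minimal vertex cover of G^a if and only if Z = p^{-1}(D) for some minimal vertex cover D of the induced subgraph G_U. -/
open MvPolynomial

/-! ## Algebraic notions: depth of quotients by homogeneous (monomial) ideals,
and the index of depth stability. -/

/-- The depth of `R/J` (for `R` a polynomial ring): the maximal length of a regular
sequence of homogeneous elements on `R/J`. -/
noncomputable def homDepth {k : Type} [Field k] {n : ℕ}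
    (J : Ideal (MvPolynomial (Fin n) k)) : ℕ :=
  sSup {r | ∃ rs : List (MvPolynomial (Fin n) k), rs.length = r ∧
    (∀ f ∈ rs, ∃ d, MvPolynomial.IsHomogeneous f d) ∧
    RingTheory.Sequence.IsRegular (MvPolynomial (Fin n) k ⧸ J) rs}

/-- The index of depth stability of an ideal `I`: the least `s ≥ 1` such that
`depth R/I^t = depth R/I^s` for all `t ≥ s`. -/
noncomputable def dstab {k : Type} [Field k] {n : ℕ}
    (I : Ideal (MvPolynomial (Fin n) k)) : ℕ :=
  sInf {s | 1 ≤ s ∧ ∀ t, s ≤ t → homDepth (I ^ t) = homDepth (I ^ s)}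

/-- The edge ideal of a graph `G` on vertices `{1,…,n}`: generated by the
monomials `xᵢxⱼ` for the edges `{i,j}` of `G`. -/
noncomputable def edgeIdeal (k : Type) [Field k] {n : ℕ} (G : SimpleGraph (Fin n)) :
    Ideal (MvPolynomial (Fin n) k) :=
  Ideal.span {m | ∃ i j, G.Adj i j ∧ m = X i * X j}

/-! ## Graph-theoretic notions -/

/-- A list of vertices forming an open path (at least one edge, no repeated vertex). -/
def IsOpenPathList {V : Type} (L : List V) : Prop := 2 ≤ L.length ∧ L.Nodup

/-- A list of vertices forming a (proper) cycle: closed, at least 3 edges,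
no repeated vertex except that the first vertex equals the last one. -/
def IsProperCycleList {V : Type} (L : List V) : Prop :=
  4 ≤ L.length ∧ L.head? = L.getLast? ∧ L.dropLast.Nodup

/-- A 2-cycle: an edge `{v,w}` with a specified endpoint `v`, regarded as the
closed walk `v, w, v` of length 2. -/
def IsTwoCycleList {V : Type} (L : List V) : Prop := ∃ v w : V, v ≠ w ∧ L = [v, w, v]

/-- An ear is a path (possibly closed, i.e. a cycle) or a 2-cycle. -/
def IsEarList {V : Type} (L : List V) : Prop :=
  IsOpenPathList L ∨ IsProperCycleList L ∨ IsTwoCycleList L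

/-- An ear which is a cycle (a proper cycle or a 2-cycle). -/
def IsCycleEarList {V : Type} (L : List V) : Prop :=
  IsProperCycleList L ∨ IsTwoCycleList L

/-- The set of edges traversed by an ear, as unordered pairs. -/
def earEdgeSet {V : Type} (L : List V) : Set (Sym2 V) :=
  {e | ∃ p ∈ L.zip L.tail, e = s(p.1, p.2)}

/-- A generalized ear decomposition of a connected graph `G`: a partition of the
edge set of `G` into a sequence of ears `L₁,…,L_r` (paths or 2-cycles) such that
`L₁` is a cycle (possibly a 2-cycle) and each later ear meets the union of the
earlier ones exactly at its endpoints. -/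
structure GenEarDecomp {V : Type} (G : SimpleGraph V) : Type where
  ears : List (List V)
  ears_nonempty : ears ≠ []
  chain_adj : ∀ L ∈ ears, L.Chain' G.Adj
  shape : ∀ L ∈ ears, IsEarList L
  first_cycle : ∀ L ∈ ears.head?, IsCycleEarList L
  attach_ends : ∀ (i : ℕ) (hi : i < ears.length), 1 ≤ i →
      (∀ x ∈ (ears.get ⟨i, hi⟩).head?, x ∈ (ears.take i).flatten) ∧
      (∀ x ∈ (ears.get ⟨i, hi⟩).getLast?, x ∈ (ears.take i).flatten)
  attach_inner : ∀ (i : ℕ) (hi : i < ears.length), 1 ≤ i →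
      ∀ x ∈ (ears.get ⟨i, hi⟩).tail.dropLast, x ∉ (ears.take i).flatten
  edges_disjoint : ∀ (i j : ℕ) (hi : i < ears.length) (hj : j < ears.length), i ≠ j →
      Disjoint (earEdgeSet (ears.get ⟨i, hi⟩)) (earEdgeSet (ears.get ⟨j, hj⟩))
  edges_cover : ∀ e, e ∈ G.edgeSet ↔ ∃ L ∈ ears, e ∈ earEdgeSet L

/-- The number of even ears (ears with an even number of edges; in particular all
2-cycles) of a generalized ear decomposition.  An ear with vertex list `L` has
`L.length - 1` edges, so it is even iff `L.length` is odd. -/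
def evenEarCount {V : Type} {G : SimpleGraph V} (E : GenEarDecomp G) : ℕ :=
  (E.ears.filter (fun L => L.length % 2 == 1)).length

/-- `φ(G)`: the minimal number of even ears in a generalized ear decomposition of `G`. -/
noncomputable def phiGraph {V : Type} (G : SimpleGraph V) : ℕ :=
  sInf {m | ∃ E : GenEarDecomp G, evenEarCount E = m}

/-- `μ(G) = (φ(G) + v(G) - 1)/2` for a connected graph `G`. -/
noncomputable def muGraph {V : Type} (G : SimpleGraph V) : ℕ :=
  (phiGraph G + Nat.card V - 1) / 2

/-- A dominating set: every vertex outside `U` is adjacent to a vertex of `U`. -/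
def IsDominatingSet {V : Type} (G : SimpleGraph V) (U : Set V) : Prop :=
  ∀ v ∉ U, ∃ u ∈ U, G.Adj v u

/-- `(A,B)` is a bipartition of `G`. -/
def IsBipartitionOf {V : Type} (G : SimpleGraph V) (A B : Set V) : Prop :=
  (∀ v, v ∈ A ∨ v ∈ B) ∧ A ∩ B = ∅ ∧
    ∀ ⦃v w⦄, G.Adj v w → ((v ∈ A ∧ w ∈ B) ∨ (v ∈ B ∧ w ∈ A))

/-- `G` is bipartite. -/
def IsBipartiteGraph {V : Type} (G : SimpleGraph V) : Prop :=
  ∃ A B : Set V, IsBipartitionOf G A B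

/-- `G` is a complete bipartite graph. -/
def IsCompleteBipartite {V : Type} (G : SimpleGraph V) : Prop :=
  ∃ A B : Set V, IsBipartitionOf G A B ∧ ∀ a ∈ A, ∀ b ∈ B, G.Adj a b

open Classical in
/-- `s(G)` for a connected bipartite graph `G`: `0` if `G` is complete bipartite,
and otherwise the minimum of `μ(G_U)` over all dominating connected induced
subgraphs `G_U` of `G`. -/
noncomputable def sBip {V : Type} (G : SimpleGraph V) : ℕ :=
  if IsCompleteBipartite G then 0
  else sInf {m | ∃ U : Set V, IsDominatingSet G U ∧ (G.induce U).Connected ∧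
    muGraph (G.induce U) = m}

/-- A graph is strongly nonbipartite if every connected component is nonbipartite. -/
def StronglyNonbipartite {V : Type} (G : SimpleGraph V) : Prop :=
  ∀ c : G.ConnectedComponent, ¬ IsBipartiteGraph (G.induce c.supp)

/-- `φ*(G)` for a (strongly nonbipartite) graph `G`: the minimal total number of even
ears in generalized ear decompositions of the connected components of `G` whose first
ear in each component is an odd cycle. -/
noncomputable def phiStar {V : Type} (G : SimpleGraph V) : ℕ :=
  sInf {m | ∃ D : ∀ c : G.ConnectedComponent, GenEarDecomp (G.induce c.supp),
    (∀ c, ∀ L ∈ (D c).ears.head?, IsProperCycleList L ∧ L.length % 2 = 0) ∧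
    (∑ᶠ c, evenEarCount (D c)) = m}

/-- `μ*(G) = (φ*(G) + v(G) - c)/2` where `c` is the number of connected components. -/
noncomputable def muStar {V : Type} (G : SimpleGraph V) : ℕ :=
  (phiStar G + Nat.card V - Nat.card G.ConnectedComponent) / 2

/-- `s(G)` for a connected nonbipartite graph `G`: the minimum of `μ*(G_U)` over all
dominating strongly nonbipartite induced subgraphs `G_U` of `G`. -/
noncomputable def sNonbip {V : Type} (G : SimpleGraph V) : ℕ :=
  sInf {m | ∃ U : Set V, IsDominatingSet G U ∧ StronglyNonbipartite (G.induce U) ∧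
    muStar (G.induce U) = m}

open Classical in
/-- `s` of a connected component of a graph, according to whether the component
is bipartite or not. -/
noncomputable def sComp {V : Type} (G : SimpleGraph V) (c : G.ConnectedComponent) : ℕ :=
  if IsBipartiteGraph (G.induce c.supp) then sBip (G.induce c.supp)
  else sNonbip (G.induce c.supp)

/-- A vertex cover of `G`. -/
def IsVertexCover {V : Type} (G : SimpleGraph V) (C : Set V) : Prop :=
  ∀ ⦃v w⦄, G.Adj v w → v ∈ C ∨ w ∈ C

/-- A minimal vertex cover of `G`. -/
def IsMinimalVertexCover {V : Type} (G : SimpleGraph V) (C : Set V) : Prop :=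
  IsVertexCover G C ∧ ∀ D ⊆ C, IsVertexCover G D → D = C

/-- `a` is a solution of the system `(*)` associated with the connected bipartite
graph `G` with bipartition `(A,B)`:
`Σ_{i∈A} aᵢ = Σ_{i∈B} aᵢ` and `Σ_{i∈C} aᵢ > Σ_{i∈A} aᵢ` for every minimal vertex
cover `C ≠ A, B` of `G`. -/
def SolvesStar {V : Type} (G : SimpleGraph V) (A B : Set V) (a : V → ℕ) : Prop :=
  (∑ᶠ i ∈ A, a i) = (∑ᶠ i ∈ B, a i) ∧
  ∀ C : Set V, IsMinimalVertexCover G C → C ≠ A → C ≠ B →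
    (∑ᶠ i ∈ A, a i) < (∑ᶠ i ∈ C, a i)

/-- The parallelization `G^a` of `G`: each vertex `i` is replaced by `a i` copies
(`i` is deleted when `a i = 0`), two copies being adjacent iff the original
vertices are adjacent in `G`. -/
def parallelization {V : Type} (G : SimpleGraph V) (a : V → ℕ) :
    SimpleGraph (Σ i : V, Fin (a i)) where
  Adj x y := G.Adj x.1 y.1
  symm := ⟨fun _ _ h => G.symm.symm _ _ h⟩
  loopless := ⟨fun x h => G.loopless.irrefl x.1 h⟩

/-- A connected graph is matching-covered if it is not an isolated vertex and every
edge is contained in a perfect matching. -/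
def IsMatchingCovered {W : Type} (H : SimpleGraph W) : Prop :=
  H.Connected ∧ H.edgeSet.Nonempty ∧
    ∀ e ∈ H.edgeSet, ∃ M : H.Subgraph, M.IsPerfectMatching ∧ e ∈ M.edgeSet

/-- An independent set of `G`. -/
def IsIndependentSet {V : Type} (G : SimpleGraph V) (F : Set V) : Prop :=
  ∀ ⦃v⦄, v ∈ F → ∀ ⦃w⦄, w ∈ F → ¬ G.Adj v w

/-- A maximal independent set of `G`. -/
def IsMaxIndependentSet {V : Type} (G : SimpleGraph V) (F : Set V) : Prop :=
  IsIndependentSet G F ∧ ∀ F', IsIndependentSet G F' → F ⊆ F' → F' = F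

/-- The number of leaves (vertices of degree 1) of `G`. -/
noncomputable def leafCount {V : Type} (G : SimpleGraph V) : ℕ :=
  {v : V | (G.neighborSet v).ncard = 1}.ncard
/-- **Lemma.** Let `U = supp(a)`. A subset `Z` of the vertex set of `G^a` is a minimal vertex
cover of `G^a` iff `Z = p⁻¹(D)` for some minimal vertex cover `D` of the induced subgraph
`G_U`. -/
theorem minimalCover_parallelization_iff {n : ℕ} (G : SimpleGraph (Fin n)) (a : Fin n → ℕ)
    (Z : Set (Σ i : Fin n, Fin (a i))) :
    IsMinimalVertexCover (parallelization G a) Z ↔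
      ∃ D : Set ({i : Fin n | a i ≠ 0} : Set (Fin n)),
        IsMinimalVertexCover (G.induce {i : Fin n | a i ≠ 0}) D ∧
        Z = {x : Σ i : Fin n, Fin (a i) | ∃ h : x.1 ∈ {i : Fin n | a i ≠ 0},
          (⟨x.1, h⟩ : ({i : Fin n | a i ≠ 0} : Set (Fin n))) ∈ D} := by
  constructor
  · rintro ⟨hcov, hmin⟩
    -- Z is "saturated": if one copy of a vertex is in Z, all copies are.
    have hsat : ∀ (i : Fin n) (r s : Fin (a i)),
        (⟨i, r⟩ : Σ i : Fin n, Fin (a i)) ∈ Z → (⟨i, s⟩ : Σ i : Fin n, Fin (a i)) ∈ Z := by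
      intro i r s hr
      by_contra hs
      have hcov' : IsVertexCover (parallelization G a) (Z \ {⟨i, r⟩}) := by
        intro v w hvw
        have hvne : v ≠ w := by rintro rfl; exact (parallelization G a).loopless.irrefl _ hvw
        by_cases hv : v = (⟨i, r⟩ : Σ i : Fin n, Fin (a i))
        · subst hv
          have hvw' : (parallelization G a).Adj ⟨i, s⟩ w := hvw
          rcases hcov hvw' with h1 | h2
          · exact absurd h1 hs
          · exact Or.inr ⟨h2, fun hw => hvne hw.symm⟩
        · by_cases hw : w = (⟨i, r⟩ : Σ i : Fin n, Fin (a i))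
          · subst hw
            have hvw' : (parallelization G a).Adj v ⟨i, s⟩ := hvw
            rcases hcov hvw' with h1 | h2
            · exact Or.inl ⟨h1, hv⟩
            · exact absurd h2 hs
          · rcases hcov hvw with h1 | h2
            · exact Or.inl ⟨h1, hv⟩
            · exact Or.inr ⟨h2, hw⟩
      have heq := hmin _ Set.diff_subset hcov'
      have hmem : (⟨i, r⟩ : Σ i : Fin n, Fin (a i)) ∈ Z \ {⟨i, r⟩} := by rw [heq]; exact hr
      exact hmem.2 rfl
    refine ⟨{j : ({i : Fin n | a i ≠ 0} : Set (Fin n)) |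
        ∃ r : Fin (a j.1), (⟨j.1, r⟩ : Σ i : Fin n, Fin (a i)) ∈ Z}, ⟨?_, ?_⟩, ?_⟩
    · -- D is a vertex cover of G_U
      intro j k hjk
      have hj : a j.1 ≠ 0 := j.2
      have hk : a k.1 ≠ 0 := k.2
      have hadj : (parallelization G a).Adj ⟨j.1, ⟨0, Nat.pos_of_ne_zero hj⟩⟩
          ⟨k.1, ⟨0, Nat.pos_of_ne_zero hk⟩⟩ := hjk
      rcases hcov hadj with h1 | h2
      · exact Or.inl ⟨_, h1⟩
      · exact Or.inr ⟨_, h2⟩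
    · -- D is minimal
      intro D' hsub hcovD'
      have hZeq : Z = {x : Σ i : Fin n, Fin (a i) | ∃ h : x.1 ∈ {i : Fin n | a i ≠ 0},
          (⟨x.1, h⟩ : ({i : Fin n | a i ≠ 0} : Set (Fin n))) ∈
            {j : ({i : Fin n | a i ≠ 0} : Set (Fin n)) |
              ∃ r : Fin (a j.1), (⟨j.1, r⟩ : Σ i : Fin n, Fin (a i)) ∈ Z}} := by
        ext x
        constructor
        · intro hx
          exact ⟨(Fin.pos x.2).ne', x.2, hx⟩
        · rintro ⟨h, r, hr⟩
          exact hsat x.1 r x.2 hr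
      have hWcov : IsVertexCover (parallelization G a)
          {x : Σ i : Fin n, Fin (a i) | ∃ h : x.1 ∈ {i : Fin n | a i ≠ 0},
            (⟨x.1, h⟩ : ({i : Fin n | a i ≠ 0} : Set (Fin n))) ∈ D'} := by
        intro v w hvw
        have hv : v.1 ∈ {i : Fin n | a i ≠ 0} := (Fin.pos v.2).ne'
        have hw : w.1 ∈ {i : Fin n | a i ≠ 0} := (Fin.pos w.2).ne'
        have hadj : (G.induce {i : Fin n | a i ≠ 0}).Adj ⟨v.1, hv⟩ ⟨w.1, hw⟩ := hvw
        rcases hcovD' hadj with h1 | h2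
        · exact Or.inl ⟨hv, h1⟩
        · exact Or.inr ⟨hw, h2⟩
      have hWsub : {x : Σ i : Fin n, Fin (a i) | ∃ h : x.1 ∈ {i : Fin n | a i ≠ 0},
          (⟨x.1, h⟩ : ({i : Fin n | a i ≠ 0} : Set (Fin n))) ∈ D'} ⊆ Z := by
        rw [hZeq]
        rintro x ⟨h, hx⟩
        exact ⟨h, hsub hx⟩
      have hWZ := hmin _ hWsub hWcov
      ext j
      constructor
      · exact fun h => hsub h
      · rintro ⟨r, hr⟩
        rw [← hWZ] at hr
        obtain ⟨h', hh⟩ := hr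
        exact hh
    · -- Z = p⁻¹(D)
      ext x
      constructor
      · intro hx
        exact ⟨(Fin.pos x.2).ne', x.2, hx⟩
      · rintro ⟨h, r, hr⟩
        exact hsat x.1 r x.2 hr
  · rintro ⟨D, ⟨hDcov, hDmin⟩, rfl⟩
    constructor
    · -- p⁻¹(D) is a vertex cover
      intro v w hvw
      have hv : v.1 ∈ {i : Fin n | a i ≠ 0} := (Fin.pos v.2).ne'
      have hw : w.1 ∈ {i : Fin n | a i ≠ 0} := (Fin.pos w.2).ne'
      have hadj : (G.induce {i : Fin n | a i ≠ 0}).Adj ⟨v.1, hv⟩ ⟨w.1, hw⟩ := hvw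
      rcases hDcov hadj with h | h
      · exact Or.inl ⟨hv, h⟩
      · exact Or.inr ⟨hw, h⟩
    · -- minimality
      intro W hWsub hWcov
      ext x
      refine ⟨fun h => hWsub h, ?_⟩
      rintro ⟨hx, hxD⟩
      -- j₀ := ⟨x.1, hx⟩ ∈ D; D \ {j₀} is not a cover, giving a neighbor u of j₀ outside D
      have hnotcov : ¬ IsVertexCover (G.induce {i : Fin n | a i ≠ 0})
          (D \ {(⟨x.1, hx⟩ : ({i : Fin n | a i ≠ 0} : Set (Fin n)))}) := by
        intro h
        have heq := hDmin _ Set.diff_subset h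
        have hmem : (⟨x.1, hx⟩ : ({i : Fin n | a i ≠ 0} : Set (Fin n))) ∈
            D \ {(⟨x.1, hx⟩ : ({i : Fin n | a i ≠ 0} : Set (Fin n)))} := by rw [heq]; exact hxD
        exact hmem.2 rfl
      unfold IsVertexCover at hnotcov
      push_neg at hnotcov
      obtain ⟨v, w, hvw, hvD, hwD⟩ := hnotcov
      have key : ∃ u : ({i : Fin n | a i ≠ 0} : Set (Fin n)),
          (G.induce {i : Fin n | a i ≠ 0}).Adj ⟨x.1, hx⟩ u ∧ u ∉ D := by
        rcases hDcov hvw with hvin | hwin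
        · have hvj : v = ⟨x.1, hx⟩ := by
            by_contra hne; exact hvD ⟨hvin, hne⟩
          refine ⟨w, hvj ▸ hvw, fun hw => hwD ⟨hw, fun hwj => ?_⟩⟩
          rw [hvj, hwj] at hvw
          exact (G.induce {i : Fin n | a i ≠ 0}).irrefl hvw
        · have hwj : w = ⟨x.1, hx⟩ := by
            by_contra hne; exact hwD ⟨hwin, hne⟩
          refine ⟨v, hwj ▸ hvw.symm, fun hv => hvD ⟨hv, fun hvj => ?_⟩⟩
          rw [hvj, hwj] at hvw
          exact (G.induce {i : Fin n | a i ≠ 0}).irrefl hvw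
      obtain ⟨u, hadj, huD⟩ := key
      have hu : a u.1 ≠ 0 := u.2
      have hadj' : (parallelization G a).Adj x ⟨u.1, ⟨0, Nat.pos_of_ne_zero hu⟩⟩ := hadj
      rcases hWcov hadj' with h1 | h2
      · exact h1
      · obtain ⟨h', hD'⟩ := hWsub h2
        exact absurd hD' huD
end

section
/- Let G be a simple graph on vertex set {1,…,n}, let a ∈ ℕ^n and U = supp(a). For every minimal vertex cover Z of the parallelization G^a, there exists a minimal vertex cover C of G such that Z = p^{-1}(C ∩ U) and |Z| = Σ_{i∈C} a_i. -/
open MvPolynomial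

/-- **Lemma.** Let `U = supp(a)`. For every minimal vertex cover `Z` of `G^a` there is a
minimal vertex cover `C` of `G` with `Z = p⁻¹(C ∩ U)` and `|Z| = Σ_{i∈C} aᵢ`. -/
theorem minimalCover_parallelization_size {n : ℕ} (G : SimpleGraph (Fin n)) (a : Fin n → ℕ)
    (Z : Set (Σ i : Fin n, Fin (a i)))
    (hZ : IsMinimalVertexCover (parallelization G a) Z) :
    ∃ C : Set (Fin n), IsMinimalVertexCover G C ∧
      Z = {x : Σ i : Fin n, Fin (a i) | x.1 ∈ C ∩ {i : Fin n | a i ≠ 0}} ∧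
      Z.ncard = ∑ᶠ i ∈ C, a i := by
  classical
  obtain ⟨hZc, hZmin⟩ := hZ
  have hneed : ∀ x ∈ Z, ∃ y, (parallelization G a).Adj x y ∧ y ∉ Z := by
    intro x hx
    by_contra h
    push_neg at h
    have hD : IsVertexCover (parallelization G a) (Z \ {x}) := by
      intro v w hvw
      rcases hZc hvw with hv | hw
      · by_cases hvx : v = x
        · rw [hvx] at hvw
          have hw' : w ∈ Z := h w hvw
          have hwx : w ≠ x := by
            intro hwx; rw [hwx] at hvw; exact (parallelization G a).loopless.irrefl _ hvw
          exact Or.inr ⟨hw', hwx⟩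
        · exact Or.inl ⟨hv, hvx⟩
      · by_cases hwx : w = x
        · rw [hwx] at hvw
          have hv' : v ∈ Z := h v hvw.symm
          have hvx : v ≠ x := by
            intro hvx; rw [hvx] at hvw; exact (parallelization G a).loopless.irrefl _ hvw
          exact Or.inl ⟨hv', hvx⟩
        · exact Or.inr ⟨hw, hwx⟩
    have heq := hZmin _ Set.diff_subset hD
    have hx' : x ∈ Z \ {x} := by rw [heq]; exact hx
    exact hx'.2 rfl
  set U : Set (Fin n) := {i : Fin n | a i ≠ 0} with hU
  set B : Set (Fin n) := {i : Fin n | ∃ r : Fin (a i), (⟨i, r⟩ : Σ i, Fin (a i)) ∈ Z} with hB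
  have hsat : ∀ (i : Fin n) (r s : Fin (a i)),
      (⟨i, r⟩ : Σ i, Fin (a i)) ∈ Z → (⟨i, s⟩ : Σ i, Fin (a i)) ∈ Z := by
    intro i r s hr
    by_contra hs
    obtain ⟨y, hadj, hy⟩ := hneed ⟨i, r⟩ hr
    have hadj' : (parallelization G a).Adj ⟨i, s⟩ y := hadj
    rcases hZc hadj' with h1 | h2
    · exact hs h1
    · exact hy h2
  have hZeq : Z = {x : Σ i : Fin n, Fin (a i) | x.1 ∈ B} := by
    ext ⟨i, r⟩
    simp only [Set.mem_setOf_eq, hB]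
    constructor
    · intro hx; exact ⟨r, hx⟩
    · rintro ⟨s, hs⟩; exact hsat i s r hs
  have hBU : B ⊆ U := by
    rintro i ⟨r, -⟩
    exact (Fin.pos r).ne'
  have hforced : ∀ i ∈ B, ∃ j, G.Adj i j ∧ a j ≠ 0 ∧ j ∉ B := by
    rintro i ⟨r, hr⟩
    obtain ⟨⟨j, t⟩, hadj, hy⟩ := hneed ⟨i, r⟩ hr
    exact ⟨j, hadj, (Fin.pos t).ne', fun hj => hy (by rw [hZeq]; exact hj)⟩
  set W : Set (Fin n) := B ∪ Uᶜ with hW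
  have hWc : IsVertexCover G W := by
    intro i j hij
    by_cases hi : a i = 0
    · exact Or.inl (Or.inr (by simp [hU, hi]))
    by_cases hj : a j = 0
    · exact Or.inr (Or.inr (by simp [hU, hj]))
    have ri : Fin (a i) := ⟨0, Nat.pos_of_ne_zero hi⟩
    have rj : Fin (a j) := ⟨0, Nat.pos_of_ne_zero hj⟩
    have hadj : (parallelization G a).Adj ⟨i, ri⟩ ⟨j, rj⟩ := hij
    rcases hZc hadj with h1 | h2
    · exact Or.inl (Or.inl ⟨ri, h1⟩)
    · exact Or.inr (Or.inl ⟨rj, h2⟩)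
  set S : Set (Set (Fin n)) := {C | C ⊆ W ∧ IsVertexCover G C} with hS
  have hSne : (Set.ncard '' S).Nonempty := ⟨W.ncard, W, ⟨le_refl W, hWc⟩, rfl⟩
  obtain ⟨C, hCS, hCcard⟩ := Nat.sInf_mem hSne
  have hCW : C ⊆ W := hCS.1
  have hCc : IsVertexCover G C := hCS.2
  have hCmin : ∀ D ⊆ C, IsVertexCover G D → D = C := by
    intro D hDC hDc
    have hDS : D ∈ S := ⟨hDC.trans hCW, hDc⟩
    have hle : sInf (Set.ncard '' S) ≤ D.ncard := Nat.sInf_le ⟨D, hDS, rfl⟩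
    rw [← hCcard] at hle
    exact Set.eq_of_subset_of_ncard_le hDC hle (Set.toFinite C)
  have hBC : B ⊆ C := by
    intro i hi
    obtain ⟨j, hadj, hja, hjB⟩ := hforced i hi
    have hjW : j ∉ W := by
      rintro (h1 | h2)
      · exact hjB h1
      · exact h2 hja
    rcases hCc hadj with h1 | h2
    · exact h1
    · exact absurd (hCW h2) hjW
  have hCUB : C ∩ U = B := by
    apply Set.Subset.antisymm
    · rintro i ⟨hiC, hiU⟩
      rcases hCW hiC with h1 | h2
      · exact h1
      · exact absurd hiU h2
    · intro i hi
      exact ⟨hBC hi, hBU hi⟩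
  refine ⟨C, ⟨hCc, hCmin⟩, by rw [hZeq, hCUB], ?_⟩
  have hZn := congrArg Set.ncard hZeq
  rw [hZn, Set.ncard_eq_toFinset_card']
  have htf : {x : Σ i : Fin n, Fin (a i) | x.1 ∈ B}.toFinset
      = B.toFinset.sigma (fun i => (Finset.univ : Finset (Fin (a i)))) := by
    ext x
    simp [Finset.mem_sigma]
  rw [htf, Finset.card_sigma]
  simp only [Finset.card_univ, Fintype.card_fin]
  have hsum : ∑ᶠ i ∈ C, a i = ∑ i ∈ C.toFinset, a i := by
    conv_lhs => rw [← Set.coe_toFinset C]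
    rw [finsum_mem_coe_finset]
  rw [hsum]
  apply Finset.sum_subset
  · intro i hi
    simp only [Set.mem_toFinset] at hi ⊢
    exact hBC hi
  · intro i hi hiB
    simp only [Set.mem_toFinset] at hi hiB
    rcases hCW hi with h1 | h2
    · exact absurd h1 hiB
    · simpa [hU] using h2
end

section
/- Let G be a connected graph. Then μ(G) ≤ v(G) − 1, and equality holds if and only if G is a tree. -/
open MvPolynomial

section EarAux

variable {V : Type} {G : SimpleGraph V}

lemma earEdgeSet_nil : earEdgeSet ([] : List V) = ∅ := by
  simp [earEdgeSet]

lemma earEdgeSet_single (a : V) : earEdgeSet [a] = ∅ := by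
  simp [earEdgeSet]

lemma earEdgeSet_cons_cons (a b : V) (t : List V) :
    earEdgeSet (a :: b :: t) = insert s(a, b) (earEdgeSet (b :: t)) := by
  ext e
  simp [earEdgeSet, List.zip, or_and_right, exists_or]

lemma earEdgeSet_pair (a b : V) : earEdgeSet [a, b] = {s(a, b)} := by
  rw [earEdgeSet_cons_cons, earEdgeSet_single]; simp

lemma earEdgeSet_twoCycle (a b : V) : earEdgeSet [a, b, a] = {s(a, b)} := by
  rw [earEdgeSet_cons_cons, earEdgeSet_pair]
  simp [Sym2.eq_swap]

lemma mem_of_mem_earEdgeSet {L : List V} {e : Sym2 V} (he : e ∈ earEdgeSet L) :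
    ∃ x y, x ∈ L ∧ y ∈ L ∧ e = s(x, y) := by
  obtain ⟨p, hp, rfl⟩ := he
  exact ⟨p.1, p.2, (List.of_mem_zip hp).1, List.mem_of_mem_tail (List.of_mem_zip hp).2, rfl⟩

lemma chain'_zip {R : V → V → Prop} : ∀ {L : List V}, List.Chain' R L →
    ∀ p ∈ L.zip L.tail, R p.1 p.2
  | [], _, p, hp => by simp at hp
  | [a], _, p, hp => by simp at hp
  | a :: b :: t, h, p, hp => by
    simp only [List.Chain', List.isChain_cons_cons] at h
    rcases List.mem_cons.1 hp with rfl | hp'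
    · exact h.1
    · exact chain'_zip h.2 p hp'

lemma earEdgeSet_subset_edgeSet {L : List V} (h : L.Chain' G.Adj) :
    earEdgeSet L ⊆ G.edgeSet := by
  rintro e ⟨p, hp, rfl⟩
  exact chain'_zip h p hp

lemma earEdgeSet_cons_subset (a : V) (L : List V) :
    earEdgeSet L ⊆ earEdgeSet (a :: L) := by
  cases L with
  | nil => simp [earEdgeSet_nil]
  | cons b t => rw [earEdgeSet_cons_cons]; exact Set.subset_insert _ _

lemma walk_of_chain : ∀ (t : List V) (a b : V), List.Chain' G.Adj (a :: t) →
    (a :: t).getLast? = some b → ∃ p : G.Walk a b, p.support = a :: t := by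
  intro t
  induction t with
  | nil =>
    intro a b _ hb
    simp at hb
    subst hb
    exact ⟨SimpleGraph.Walk.nil, rfl⟩
  | cons c t' ih =>
    intro a b hc hb
    simp only [List.Chain', List.isChain_cons_cons] at hc
    rw [List.getLast?_cons_cons] at hb
    obtain ⟨p, hp⟩ := ih c b hc.2 hb
    exact ⟨SimpleGraph.Walk.cons hc.1 p, by simp [hp]⟩

lemma walk_to_mem : ∀ (t : List V) (a x : V), List.Chain' G.Adj (a :: t) →
    x ∈ a :: t → ∃ p : G.Walk a x, ∀ e ∈ p.edges, e ∈ earEdgeSet (a :: t) := by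
  intro t
  induction t with
  | nil =>
    intro a x _ hx
    simp at hx
    subst hx
    exact ⟨SimpleGraph.Walk.nil, by simp⟩
  | cons c t' ih =>
    intro a x hc hx
    simp only [List.Chain', List.isChain_cons_cons] at hc
    by_cases hxa : x = a
    · subst hxa; exact ⟨SimpleGraph.Walk.nil, by simp⟩
    · have hx' : x ∈ c :: t' := by
        rcases List.mem_cons.1 hx with rfl | h
        · exact absurd rfl hxa
        · exact h
      obtain ⟨p, hp⟩ := ih c x hc.2 hx'
      refine ⟨SimpleGraph.Walk.cons hc.1 p, ?_⟩
      intro e he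
      rw [SimpleGraph.Walk.edges_cons, List.mem_cons] at he
      rcases he with rfl | he
      · rw [earEdgeSet_cons_cons]; exact Set.mem_insert _ _
      · exact earEdgeSet_cons_subset _ _ (hp e he)

lemma edges_mem_earEdgeSet_support {a b : V} (p : G.Walk a b) :
    ∀ e ∈ p.edges, e ∈ earEdgeSet p.support := by
  induction p with
  | nil => simp
  | @cons u v w h q ih =>
    intro e he
    rw [SimpleGraph.Walk.edges_cons, List.mem_cons] at he
    rw [SimpleGraph.Walk.support_cons]
    rcases he with rfl | he
    · rw [q.support_eq_cons, earEdgeSet_cons_cons]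
      exact Set.mem_insert _ _
    · exact earEdgeSet_cons_subset _ _ (ih e he)

lemma IsEarList.two_le_length {L : List V} (h : IsEarList L) : 2 ≤ L.length := by
  rcases h with h | h | ⟨v, w, _, rfl⟩
  · exact h.1
  · exact le_trans (by norm_num) h.1
  · simp

lemma flatten_take_mono {α : Type*} (l : List (List α)) {i j : ℕ} (h : i ≤ j) :
    ∀ x ∈ (l.take i).flatten, x ∈ (l.take j).flatten := by
  intro x hx
  rw [List.mem_flatten] at hx ⊢
  obtain ⟨s, hs, hxs⟩ := hx
  refine ⟨s, ?_, hxs⟩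
  have : l.take i = (l.take j).take i := by rw [List.take_take, min_eq_left h]
  rw [this] at hs
  exact List.mem_of_mem_take hs

lemma mem_take_succ {α : Type*} (l : List α) (i : ℕ) (hi : i < l.length) :
    l.get ⟨i, hi⟩ ∈ l.take (i + 1) := by
  rw [List.take_succ]
  refine List.mem_append.2 (Or.inr ?_)
  simp [List.getElem?_eq_getElem hi]

lemma mem_take_mono {α : Type*} {l : List α} {i j : ℕ} (h : i ≤ j) {x : α}
    (hx : x ∈ l.take i) : x ∈ l.take j := by
  have : l.take i = (l.take j).take i := by rw [List.take_take, min_eq_left h]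
  rw [this] at hx
  exact List.mem_of_mem_take hx

lemma walk_mem_mem {L : List V} (hc : L.Chain' G.Adj) {x y : V}
    (hx : x ∈ L) (hy : y ∈ L) :
    ∃ p : G.Walk x y, ∀ e ∈ p.edges, e ∈ earEdgeSet L := by
  obtain ⟨a, t, rfl⟩ : ∃ a t, L = a :: t := by
    cases L with
    | nil => simp at hx
    | cons a t => exact ⟨a, t, rfl⟩
  obtain ⟨p, hp⟩ := walk_to_mem t a x hc hx
  obtain ⟨q, hq⟩ := walk_to_mem t a y hc hy
  refine ⟨p.reverse.append q, ?_⟩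
  intro e he
  rw [SimpleGraph.Walk.edges_append, List.mem_append] at he
  rcases he with he | he
  · rw [SimpleGraph.Walk.edges_reverse, List.mem_reverse] at he
    exact hp e he
  · exact hq e he

lemma decomp_conn (E : GenEarDecomp G) {a₀ : V} (ha : a₀ ∈ (E.ears.take 1).flatten) :
    ∀ i x, x ∈ (E.ears.take (i + 1)).flatten →
      ∃ p : G.Walk x a₀, ∀ e ∈ p.edges, ∃ L ∈ E.ears.take (i + 1), e ∈ earEdgeSet L := by
  intro i
  induction i with
  | zero =>
    intro x hx
    rw [List.mem_flatten] at hx ha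
    obtain ⟨L, hL, hxL⟩ := hx
    obtain ⟨L', hL', haL⟩ := ha
    have hLL' : L = L' := by
      rw [List.take_one] at hL hL'
      rcases hmm : E.ears.head? with _ | M
      · rw [hmm] at hL; simp at hL
      · rw [hmm] at hL hL'
        simp at hL hL'
        rw [hL, hL']
    subst hLL'
    obtain ⟨p, hp⟩ := walk_mem_mem (E.chain_adj L (List.mem_of_mem_take hL)) hxL haL
    exact ⟨p, fun e he => ⟨L, hL, hp e he⟩⟩
  | succ i ih =>
    intro x hx
    by_cases h : i + 1 < E.ears.length
    · rw [List.take_succ, List.flatten_append, List.mem_append] at hx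
      rcases hx with hx | hx
      · obtain ⟨p, hp⟩ := ih x hx
        exact ⟨p, fun e he => by
          obtain ⟨L, hL, heL⟩ := hp e he
          exact ⟨L, mem_take_mono (Nat.le_succ _) hL, heL⟩⟩
      · -- x is in ear i+1
        have hx' : x ∈ E.ears.get ⟨i + 1, h⟩ := by
          simp [List.getElem?_eq_getElem h] at hx
          simpa using hx
        set L := E.ears.get ⟨i + 1, h⟩ with hLdef
        have hLmem : L ∈ E.ears := E.ears.get_mem _
        have hLne : L ≠ [] := by
          have := (E.shape L hLmem).two_le_length
          intro hnil; rw [hnil] at this; simp at this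
        have hhead : L.head hLne ∈ (E.ears.take (i + 1)).flatten := by
          refine (E.attach_ends (i + 1) h (by omega)).1 _ ?_
          rw [← hLdef, List.head?_eq_head hLne]
          rfl
        obtain ⟨p, hp⟩ := walk_mem_mem (E.chain_adj L hLmem) hx' (List.head_mem hLne)
        obtain ⟨q, hq⟩ := ih _ hhead
        refine ⟨p.append q, ?_⟩
        intro e he
        rw [SimpleGraph.Walk.edges_append, List.mem_append] at he
        rcases he with he | he
        · exact ⟨L, mem_take_succ _ _ h, hp e he⟩
        · obtain ⟨L', hL', heL⟩ := hq e he
          exact ⟨L', mem_take_mono (Nat.le_succ _) hL', heL⟩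
    · rw [List.take_of_length_le (by omega), ← List.take_of_length_le (show E.ears.length ≤ i + 1 by omega)] at hx
      obtain ⟨p, hp⟩ := ih x hx
      refine ⟨p, fun e he => ?_⟩
      obtain ⟨L, hL, heL⟩ := hp e he
      exact ⟨L, mem_take_mono (Nat.le_succ _) hL, heL⟩

lemma no_proper_cycle (hac : G.IsAcyclic) {L : List V} (hc : L.Chain' G.Adj)
    (h : IsProperCycleList L) : False := by
  obtain ⟨hlen, hhl, hnd⟩ := h
  obtain ⟨a, t, rfl⟩ : ∃ a t, L = a :: t := by
    cases L with
    | nil => simp at hlen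
    | cons a t => exact ⟨a, t, rfl⟩
  have htne : t ≠ [] := by
    intro hnil; rw [hnil] at hlen; simp at hlen
  have hgl : (a :: t).getLast? = some a := by
    rw [← hhl]; rfl
  obtain ⟨p, hp⟩ := walk_of_chain t a a hc hgl
  cases p with
  | nil =>
    rw [SimpleGraph.Walk.support_nil] at hp
    exact htne (by simpa using hp.symm)
  | @cons _ c _ hadj q =>
    rw [SimpleGraph.Walk.support_cons, List.cons.injEq] at hp
    have hts : q.support = t := hp.2
    -- t is nodup
    have hdl : (a :: t).dropLast = a :: t.dropLast := by
      cases t with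
      | nil => exact absurd rfl htne
      | cons x s => rfl
    rw [hdl, List.nodup_cons] at hnd
    have hglt : t.getLast htne = a := by
      have h2 : t.getLast? = some a := by
        cases hx : t.getLast? with
        | none => exact absurd (List.getLast?_eq_none_iff.1 hx) htne
        | some x =>
          obtain ⟨y, s, rfl⟩ : ∃ y s, t = y :: s := by
            cases t with
            | nil => exact absurd rfl htne
            | cons y s => exact ⟨y, s, rfl⟩
          rw [List.getLast?_cons_cons, hx] at hgl
          exact hgl
      rwa [List.getLast?_eq_getLast htne, Option.some_inj] at h2
    have htnd : t.Nodup := by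
      have hconc := List.dropLast_concat_getLast htne
      rw [hglt] at hconc
      rw [← hconc, List.nodup_append]
      refine ⟨hnd.2, List.nodup_singleton a, ?_⟩
      intro x hx y hy
      rw [List.mem_singleton] at hy
      subst hy
      exact fun h => hnd.1 (h ▸ hx)
    have hqpath : q.IsPath := SimpleGraph.Walk.IsPath.mk' (hts ▸ htnd)
    have hq : (⟨q.reverse, hqpath.reverse⟩ : G.Path a c) = SimpleGraph.Path.singleton hadj :=
      hac.path_unique _ _
    have hlq : q.reverse.length = 1 := by
      rw [congrArg (fun (P : G.Path a c) => P.1.length) hq]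
      rfl
    rw [SimpleGraph.Walk.length_reverse] at hlq
    have : q.support.length = q.length + 1 := q.length_support
    rw [hts] at this
    simp only [List.length_cons] at hlen
    omega

lemma ears_twoCycle (hac : G.IsAcyclic) (E : GenEarDecomp G) :
    ∀ i (hi : i < E.ears.length), IsTwoCycleList (E.ears.get ⟨i, hi⟩) := by
  intro i hi
  set L := E.ears.get ⟨i, hi⟩ with hLdef
  have hLmem : L ∈ E.ears := E.ears.get_mem _
  have hchain := E.chain_adj L hLmem
  rcases E.shape L hLmem with hop | hpc | htc
  · -- open path: impossible
    exfalso
    rcases Nat.eq_zero_or_pos i with rfl | hipos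
    · -- first ear must be a cycle
      have hhd : E.ears.head? = some L := by
        rw [hLdef, List.head?_eq_getElem?, List.getElem?_eq_getElem hi]
        rfl
      rcases E.first_cycle L (by rw [hhd]; rfl) with hpc | ⟨v, w, hvw, hL⟩
      · exact no_proper_cycle hac hchain hpc
      · rw [hL] at hop
        rcases hop with ⟨-, hnd⟩
        simp at hnd
    · -- later open-path ear: gives a cycle
      classical
      obtain ⟨k, rfl⟩ : ∃ k, i = k + 1 := ⟨i - 1, by omega⟩
      obtain ⟨a, t, hLat⟩ : ∃ a t, L = a :: t := by
        cases hL : L with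
        | nil => rw [hL] at hop; simp [IsOpenPathList] at hop
        | cons a t => exact ⟨a, t, rfl⟩
      have htne : t ≠ [] := by
        intro hnil
        rw [hLat, hnil] at hop
        simp [IsOpenPathList] at hop
      -- endpoints
      have hbL : L.getLast? = some (t.getLast htne) := by
        rw [hLat]
        cases t with
        | nil => exact absurd rfl htne
        | cons y s =>
          rw [List.getLast?_cons_cons, List.getLast?_eq_getLast (l := y :: s) (by simp)]
      set b := t.getLast htne with hbdef
      obtain ⟨p0, hp0⟩ := walk_of_chain t a b (hLat ▸ hchain) (by rw [← hLat]; exact hbL)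
      have hp0path : p0.IsPath := SimpleGraph.Walk.IsPath.mk' (by rw [hp0, ← hLat]; exact hop.2)
      -- anchor in the first ear
      obtain ⟨L₀, rest, hE⟩ : ∃ L₀ rest, E.ears = L₀ :: rest := by
        cases hEE : E.ears with
        | nil => exact absurd hEE E.ears_nonempty
        | cons L₀ rest => exact ⟨L₀, rest, rfl⟩
      have hL₀ne : L₀ ≠ [] := by
        have := (E.shape L₀ (by rw [hE]; exact List.mem_cons_self)).two_le_length
        intro hnil; rw [hnil] at this; simp at this
      have ha₀ : L₀.head hL₀ne ∈ (E.ears.take 1).flatten := by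
        rw [hE]
        simpa using List.head_mem hL₀ne
      -- walks from a and b to the anchor using only earlier ears
      have haflat : a ∈ (E.ears.take (k + 1)).flatten := by
        refine (E.attach_ends (k + 1) hi (by omega)).1 _ ?_
        rw [← hLdef, hLat]
        rfl
      have hbflat : b ∈ (E.ears.take (k + 1)).flatten := by
        refine (E.attach_ends (k + 1) hi (by omega)).2 _ ?_
        rw [← hLdef, hbL]
        rfl
      obtain ⟨W1, hW1⟩ := decomp_conn E ha₀ k a haflat
      obtain ⟨W2, hW2⟩ := decomp_conn E ha₀ k b hbflat
      set W := W1.append W2.reverse with hWdef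
      have hWedges : ∀ e ∈ W.edges, ∃ L' ∈ E.ears.take (k + 1), e ∈ earEdgeSet L' := by
        intro e he
        rw [hWdef, SimpleGraph.Walk.edges_append, List.mem_append] at he
        rcases he with he | he
        · exact hW1 e he
        · rw [SimpleGraph.Walk.edges_reverse, List.mem_reverse] at he
          exact hW2 e he
      -- path uniqueness
      have hpeq : (⟨p0, hp0path⟩ : G.Path a b) = ⟨W.bypass, W.bypass_isPath⟩ :=
        hac.path_unique _ _
      have hpeq' : p0 = W.bypass := congrArg Subtype.val hpeq
      -- an edge of p0
      have hp0len : 1 ≤ p0.length := by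
        have h1 := p0.length_support
        rw [hp0] at h1
        have h2 := hop.1
        rw [hLat] at h2
        simp only [List.length_cons] at h1 h2
        omega
      have hedne : p0.edges ≠ [] := by
        intro hnil
        have := p0.length_edges
        rw [hnil] at this
        simp at this
        omega
      obtain ⟨e, he⟩ := List.exists_mem_of_ne_nil _ hedne
      have heL : e ∈ earEdgeSet L := by
        rw [hLat, ← hp0]
        exact edges_mem_earEdgeSet_support p0 e he
      have heW : e ∈ W.edges := W.edges_bypass_subset (hpeq' ▸ he)
      obtain ⟨L', hL', heL'⟩ := hWedges e heW
      obtain ⟨j, hjL'⟩ := List.mem_iff_get.1 hL'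
      have hjlt : (j : ℕ) < k + 1 := by
        have := j.2
        simp [List.length_take] at this
        omega
      have hjlen : (j : ℕ) < E.ears.length := by omega
      have hgetj : E.ears.get ⟨j, hjlen⟩ = L' := by
        rw [← hjL']
        simp [List.getElem_take]
      have hdisj := E.edges_disjoint j (k + 1) hjlen hi (by omega)
      rw [hgetj, ← hLdef] at hdisj
      exact Set.disjoint_left.1 hdisj heL' heL
  · exact absurd hpc (fun h => no_proper_cycle hac hchain h)
  · exact htc

lemma tree_count [Fintype V] (htree : G.IsTree) (E : GenEarDecomp G) :
    evenEarCount E = Fintype.card V - 1 := by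
  classical
  have h2c := ears_twoCycle htree.2 E
  have hfilter : E.ears.filter (fun L => L.length % 2 == 1) = E.ears := by
    rw [List.filter_eq_self]
    intro L hL
    obtain ⟨i, hgi⟩ := List.mem_iff_get.1 hL
    obtain ⟨v, w, hvw, hLvw⟩ := h2c i i.2
    rw [hgi] at hLvw
    rw [hLvw]
    simp
  have hcount : evenEarCount E = E.ears.length := by
    rw [evenEarCount, hfilter]
  -- build bijection between ears and edges
  have hsing : ∀ i : Fin E.ears.length, ∃ e : G.edgeSet,
      earEdgeSet (E.ears.get i) = {(e : Sym2 V)} := by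
    intro i
    obtain ⟨v, w, hvw, hLvw⟩ := h2c i i.2
    have hadj : G.Adj v w := by
      have := E.chain_adj _ (E.ears.get_mem i)
      rw [hLvw] at this
      simp [List.Chain', List.isChain_cons_cons] at this
      exact this.1
    exact ⟨⟨s(v, w), hadj⟩, by rw [hLvw]; exact earEdgeSet_twoCycle v w⟩
  choose f hf using hsing
  have hbij : Function.Bijective f := by
    constructor
    · intro i j hij
      by_contra hne
      have hdisj := E.edges_disjoint i j i.2 j.2 (fun h => hne (Fin.ext h))
      rw [hf i, hf j, hij, Set.disjoint_singleton] at hdisj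
      exact hdisj rfl
    · intro e
      obtain ⟨L, hL, heL⟩ := (E.edges_cover e.1).1 e.2
      obtain ⟨i, hgi⟩ := List.mem_iff_get.1 hL
      rw [← hgi, hf i, Set.mem_singleton_iff] at heL
      exact ⟨i, (Subtype.ext heL).symm⟩
  haveI : Fintype ↥G.edgeSet := Fintype.ofFinite _
  have hlen : E.ears.length = Fintype.card ↥G.edgeSet := by
    rw [← Fintype.card_fin E.ears.length]
    exact Fintype.card_of_bijective hbij
  rw [hcount, hlen, ← Set.toFinset_card]
  have hh := htree.card_edgeFinset
  simp only [SimpleGraph.edgeFinset] at hh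
  omega

section Build
variable [DecidableEq V]

/-- A valid sequence of attachments: each pair `(u, v)` has `u` already reached,
`v` new, and `u ~ v`. -/
def GoodExt (G : SimpleGraph V) : Finset V → List (V × V) → Prop
  | _, [] => True
  | S, p :: t => p.1 ∈ S ∧ p.2 ∉ S ∧ G.Adj p.1 p.2 ∧ GoodExt G (insert p.2 S) t

def Sacc (S : Finset V) (t : List (V × V)) : Finset V := S ∪ (t.map Prod.snd).toFinset

@[simp] lemma Sacc_nil (S : Finset V) : Sacc S [] = S := by simp [Sacc]

lemma Sacc_cons (S : Finset V) (p : V × V) (t : List (V × V)) :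
    Sacc S (p :: t) = Sacc (insert p.2 S) t := by
  ext x
  simp only [Sacc, List.map_cons, List.toFinset_cons, Finset.mem_union, Finset.mem_insert]
  tauto

lemma Sacc_subset (S : Finset V) (t : List (V × V)) : S ⊆ Sacc S t :=
  Finset.subset_union_left

lemma Sacc_mono_take (S : Finset V) (t : List (V × V)) {j k : ℕ} (h : j ≤ k) :
    Sacc S (t.take j) ⊆ Sacc S (t.take k) := by
  intro x hx
  simp only [Sacc, Finset.mem_union, List.mem_toFinset, List.mem_map] at hx ⊢
  rcases hx with hx | ⟨p, hp, rfl⟩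
  · exact Or.inl hx
  · exact Or.inr ⟨p, mem_take_mono h hp, rfl⟩

lemma goodExt_get : ∀ (t : List (V × V)) (S : Finset V), GoodExt G S t →
    ∀ (k : ℕ) (hk : k < t.length),
      (t.get ⟨k, hk⟩).1 ∈ Sacc S (t.take k) ∧ (t.get ⟨k, hk⟩).2 ∉ Sacc S (t.take k) ∧
      G.Adj (t.get ⟨k, hk⟩).1 (t.get ⟨k, hk⟩).2
  | [], _, _, k, hk => by simp at hk
  | p :: t', S, h, 0, hk => by
    obtain ⟨h1, h2, h3, _⟩ := h
    exact ⟨by simpa using h1, by simpa using h2, h3⟩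
  | p :: t', S, h, k + 1, hk => by
    obtain ⟨h1, h2, h3, h4⟩ := h
    have := goodExt_get t' (insert p.2 S) h4 k (by simpa using hk)
    simpa [Sacc_cons] using this

lemma goodExt_card [Fintype V] : ∀ (t : List (V × V)) (S : Finset V), GoodExt G S t →
    (Sacc S t).card = S.card + t.length
  | [], S, _ => by simp
  | p :: t', S, h => by
    obtain ⟨h1, h2, h3, h4⟩ := h
    rw [Sacc_cons, goodExt_card t' _ h4, Finset.card_insert_of_notMem h2]
    simp only [List.length_cons]
    omega

lemma exists_goodExt [Fintype V] (hconn : G.Connected) :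
    ∀ (n : ℕ) (S : Finset V), S.Nonempty → Sᶜ.card ≤ n →
      ∃ t, GoodExt G S t ∧ Sacc S t = Finset.univ := by
  intro n
  induction n with
  | zero =>
    intro S hS hcard
    refine ⟨[], trivial, ?_⟩
    have : Sᶜ = ∅ := Finset.card_eq_zero.1 (Nat.le_zero.1 hcard)
    simpa [Sacc] using (Finset.compl_eq_empty_iff _).1 this
  | succ n ih =>
    intro S hS hcard
    by_cases hc : Sᶜ = ∅
    · exact ⟨[], trivial, by simpa [Sacc] using (Finset.compl_eq_empty_iff _).1 hc⟩
    · obtain ⟨w, hw⟩ := Finset.nonempty_iff_ne_empty.2 hc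
      obtain ⟨s, hs⟩ := hS
      rw [Finset.mem_compl] at hw
      obtain ⟨pw⟩ := hconn.preconnected s w
      obtain ⟨d, _, hd1, hd2⟩ := pw.exists_boundary_dart (S : Set V) (by simpa using hs)
        (by simpa using hw)
      have hd2' : d.snd ∉ S := by simpa using hd2
      have hcompl : (insert d.snd S)ᶜ.card ≤ n := by
        rw [Finset.compl_insert, Finset.card_erase_of_mem (Finset.mem_compl.2 hd2')]
        omega
      obtain ⟨t, ht, hcov⟩ := ih (insert d.snd S) ⟨s, Finset.mem_insert_of_mem hs⟩ hcompl
      exact ⟨(d.fst, d.snd) :: t, ⟨by simpa using hd1, hd2', d.adj, ht⟩,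
        by rwa [Sacc_cons]⟩

end Build
-- build_decomp, to be appended to a.lean after testing
section BuildDecomp
variable [DecidableEq V]

lemma build_decomp [Fintype V] (F : List V) (t : List (V × V)) (R : List (V × V))
    (hFc : List.Chain' G.Adj F) (hF : IsCycleEarList F)
    (hgood : GoodExt G F.toFinset t) (hcov : Sacc F.toFinset t = Finset.univ)
    (hRadj : ∀ p ∈ R, G.Adj p.1 p.2)
    (hRnodup : (R.map fun p => s(p.1, p.2)).Nodup)
    (hRnewF : ∀ p ∈ R, s(p.1, p.2) ∉ earEdgeSet F)
    (hRnewT : ∀ p ∈ R, ∀ q ∈ t, s(p.1, p.2) ≠ s(q.1, q.2))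
    (hecov : ∀ e ∈ G.edgeSet,
      e ∈ earEdgeSet F ∨ (∃ q ∈ t, e = s(q.1, q.2)) ∨ ∃ p ∈ R, e = s(p.1, p.2)) :
    ∃ E : GenEarDecomp G, evenEarCount E ≤ 1 + t.length := by
  set fT : V × V → List V := fun p => [p.1, p.2, p.1] with hfT
  set fR : V × V → List V := fun p => [p.1, p.2] with hfR
  set S : Finset V := F.toFinset with hSdef
  set M : List (List V) := t.map fT with hM
  set N : List (List V) := R.map fR with hN
  set ears : List (List V) := F :: (M ++ N) with hears
  have hFlen : 2 ≤ F.length := IsEarList.two_le_length (Or.inr hF)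
  have hFne : F ≠ [] := by intro h; rw [h] at hFlen; simp at hFlen
  have hMlen : M.length = t.length := by simp [hM]
  have hNlen : N.length = R.length := by simp [hN]
  -- basic facts from GoodExt
  have hT := goodExt_get t S hgood
  -- index splitting
  have hsplit : ∀ (i : ℕ) (hi : i < ears.length), 1 ≤ i →
      (∃ (k : ℕ) (hk : k < t.length), i = k + 1 ∧
        ears.get ⟨i, hi⟩ = fT (t.get ⟨k, hk⟩)) ∨
      (∃ (m : ℕ) (hm : m < R.length), i = t.length + 1 + m ∧
        ears.get ⟨i, hi⟩ = fR (R.get ⟨m, hm⟩)) := by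
    intro i hi h1
    obtain ⟨j, rfl⟩ : ∃ j, i = j + 1 := ⟨i - 1, by omega⟩
    have hj : j < M.length + N.length := by
      have := hi
      simp only [hears, List.length_cons, List.length_append] at this
      omega
    by_cases hjM : j < t.length
    · refine Or.inl ⟨j, hjM, rfl, ?_⟩
      show ears[j+1] = _
      have e1 : ears[j+1] = (M ++ N)[j]'(by simpa using hj) := List.getElem_cons_succ _ _ _ _
      have hjM' : j < M.length := by rwa [hMlen]
      have e2 : (M ++ N)[j]'(by simpa using hj) = M[j]'hjM' := List.getElem_append_left hjM'
      have e3 : M[j]'hjM' = fT (t[j]'hjM) := List.getElem_map _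
      exact (e1.trans (e2.trans e3))
    · refine Or.inr ⟨j - t.length, by omega, by omega, ?_⟩
      show ears[j+1] = _
      have e1 : ears[j+1] = (M ++ N)[j]'(by simpa using hj) := List.getElem_cons_succ _ _ _ _
      have hj2 : j < t.length + R.length := by rw [← hMlen, ← hNlen]; exact hj
      have hjM' : M.length ≤ j := by rw [hMlen]; omega
      have hjN : j - M.length < N.length := by rw [hMlen, hNlen]; omega
      have e2 : (M ++ N)[j]'(by simpa using hj) = N[j - M.length]'hjN :=
        List.getElem_append_right hjM'
      have e3 : N[j - M.length]'hjN = fR (R[j - M.length]'(by rwa [hNlen] at hjN)) :=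
        List.getElem_map _
      rw [e1, e2, e3]
      congr 1 <;> simp [hMlen]
  -- flatten of prefixes
  have hflat : ∀ k, k ≤ t.length → ∀ x : V,
      (x ∈ (ears.take (k + 1)).flatten ↔ x ∈ Sacc S (t.take k)) := by
    intro k hk x
    have htake : ears.take (k + 1) = F :: (t.take k).map fT := by
      rw [hears, List.take_succ_cons, List.take_append_of_le_length (by rwa [hMlen]), hM,
        ← List.map_take]
    rw [htake]
    simp only [List.flatten_cons, List.mem_append, List.mem_flatten, List.mem_map]
    constructor
    · rintro (hxF | ⟨L, ⟨p, hp, rfl⟩, hxL⟩)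
      · exact Sacc_subset _ _ (by rwa [hSdef, List.mem_toFinset])
      · have hx' : x = p.1 ∨ x = p.2 := by
          simp only [hfT, List.mem_cons, List.mem_singleton, List.not_mem_nil, or_false] at hxL
          tauto
        rcases hx' with h | h
        · -- first coordinate: reached earlier
          rw [h]
          obtain ⟨jf, hjf⟩ := List.mem_iff_get.1 hp
          have hjlt : (jf : ℕ) < k := by
            have := jf.2
            simp [List.length_take] at this
            omega
          have hjt : (jf : ℕ) < t.length := by
            have := jf.2
            simp [List.length_take] at this
            omega
          have hgt : t.get ⟨jf, hjt⟩ = p := by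
            rw [← hjf]
            simp [List.getElem_take]
          have := (hT jf hjt).1
          rw [hgt] at this
          exact Sacc_mono_take _ _ (by omega) this
        · -- second coordinate
          rw [h]
          simp only [Sacc, Finset.mem_union, List.mem_toFinset, List.mem_map]
          exact Or.inr ⟨p, hp, rfl⟩
    · intro hx
      simp only [Sacc, Finset.mem_union, List.mem_toFinset, List.mem_map] at hx
      rcases hx with hx | ⟨p, hp, rfl⟩
      · exact Or.inl (by rwa [hSdef, List.mem_toFinset] at hx)
      · exact Or.inr ⟨fT p, ⟨p, hp, rfl⟩, by simp [hfT]⟩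
  -- all vertices are in the "tree part"
  have hflatall : ∀ (i : ℕ), t.length + 1 ≤ i → ∀ x : V, x ∈ (ears.take i).flatten := by
    intro i hi x
    refine flatten_take_mono _ hi x ?_
    rw [hflat t.length le_rfl, List.take_length, hcov]
    exact Finset.mem_univ x
  -- tree edges are distinct from F edges
  have hTF : ∀ (k : ℕ) (hk : k < t.length),
      s((t.get ⟨k, hk⟩).1, (t.get ⟨k, hk⟩).2) ∉ earEdgeSet F := by
    intro k hk hmem
    obtain ⟨x, y, hx, hy, he⟩ := mem_of_mem_earEdgeSet hmem
    have h2 : (t.get ⟨k, hk⟩).2 ∈ F := by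
      rw [Sym2.eq_iff] at he
      rcases he with ⟨-, h⟩ | ⟨-, h⟩ <;> rw [h] <;> assumption
    exact (hT k hk).2.1 (Sacc_subset _ _ (by rw [hSdef, List.mem_toFinset]; exact h2))
  -- tree edges are pairwise distinct
  have hTT : ∀ (k k' : ℕ) (hk : k < t.length) (hk' : k' < t.length), k < k' →
      s((t.get ⟨k, hk⟩).1, (t.get ⟨k, hk⟩).2) ≠ s((t.get ⟨k', hk'⟩).1, (t.get ⟨k', hk'⟩).2) := by
    intro k k' hk hk' hkk' he
    have h1 : (t.get ⟨k, hk⟩).1 ∈ Sacc S (t.take k') :=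
      Sacc_mono_take _ _ (le_of_lt hkk') (hT k hk).1
    have h2 : (t.get ⟨k, hk⟩).2 ∈ Sacc S (t.take k') := by
      simp only [Sacc, Finset.mem_union, List.mem_toFinset, List.mem_map]
      refine Or.inr ⟨t.get ⟨k, hk⟩, ?_, rfl⟩
      have : (t.take k').get ⟨k, by simp [List.length_take]; omega⟩ = t.get ⟨k, hk⟩ := by
        simp [List.getElem_take]
      rw [← this]
      exact List.get_mem _ _
    have h3 : (t.get ⟨k', hk'⟩).2 ∈ Sacc S (t.take k') := by
      rw [Sym2.eq_iff] at he
      rcases he with ⟨h, h'⟩ | ⟨h, h'⟩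
      · rw [← h']; exact h2
      · rw [← h]; exact h1
    exact (hT k' hk').2.1 h3
  -- every ear edge set and adjacency facts
  have hearlen : ears.length = 1 + (t.length + R.length) := by
    simp [hears, hM, hN]
    omega
  -- construct the decomposition
  refine ⟨⟨ears, by simp [hears], ?_, ?_, ?_, ?_, ?_, ?_, ?_⟩, ?_⟩
  · -- chain_adj
    intro L hL
    rw [hears, List.mem_cons, List.mem_append] at hL
    rcases hL with rfl | hL | hL
    · exact hFc
    · obtain ⟨p, hp, rfl⟩ := List.mem_map.1 hL
      obtain ⟨jf, hjf⟩ := List.mem_iff_get.1 hp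
      have hadj : G.Adj p.1 p.2 := by rw [← hjf]; exact (hT jf jf.2).2.2
      simp [hfT, List.Chain', List.isChain_cons_cons, hadj, hadj.symm]
    · obtain ⟨p, hp, rfl⟩ := List.mem_map.1 hL
      simp [hfR, List.Chain', List.isChain_cons_cons, hRadj p hp]
  · -- shape
    intro L hL
    rw [hears, List.mem_cons, List.mem_append] at hL
    rcases hL with rfl | hL | hL
    · exact Or.inr hF
    · obtain ⟨p, hp, rfl⟩ := List.mem_map.1 hL
      obtain ⟨jf, hjf⟩ := List.mem_iff_get.1 hp
      have hadj : G.Adj p.1 p.2 := by rw [← hjf]; exact (hT jf jf.2).2.2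
      exact Or.inr (Or.inr ⟨p.1, p.2, hadj.ne, rfl⟩)
    · obtain ⟨p, hp, rfl⟩ := List.mem_map.1 hL
      exact Or.inl ⟨by simp [hfR], by simp [hfR, (hRadj p hp).ne]⟩
  · -- first_cycle
    intro L hL
    have hFL : F = L := by
      rw [hears] at hL
      simpa using hL
    rw [← hFL]
    exact hF
  · -- attach_ends
    intro i hi h1
    rcases hsplit i hi h1 with ⟨k, hk, rfl, hget⟩ | ⟨m, hm, rfl, hget⟩
    · rw [hget]
      constructor
      · intro x hx
        simp only [hfT, List.head?_cons, Option.mem_def, Option.some_inj] at hx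
        rw [hflat k (le_of_lt hk), ← hx]
        exact (hT k hk).1
      · intro x hx
        simp only [hfT] at hx
        simp only [List.getLast?_cons_cons, List.getLast?_singleton, Option.mem_def,
          Option.some_inj] at hx
        rw [hflat k (le_of_lt hk), ← hx]
        exact (hT k hk).1
    · rw [hget]
      exact ⟨fun x _ => hflatall _ (by omega) x, fun x _ => hflatall _ (by omega) x⟩
  · -- attach_inner
    intro i hi h1
    rcases hsplit i hi h1 with ⟨k, hk, rfl, hget⟩ | ⟨m, hm, rfl, hget⟩
    · rw [hget]
      intro x hx
      simp only [hfT, List.tail_cons, List.dropLast] at hx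
      simp only [List.mem_singleton] at hx
      rw [hx, hflat k (le_of_lt hk)]
      exact (hT k hk).2.1
    · rw [hget]
      intro x hx
      simp [hfR] at hx
  · -- edges_disjoint
    have key : ∀ (i j : ℕ) (hi : i < ears.length) (hj : j < ears.length), i < j →
        Disjoint (earEdgeSet (ears.get ⟨i, hi⟩)) (earEdgeSet (ears.get ⟨j, hj⟩)) := by
      intro i j hi hj hij
      rcases hsplit j hj (by omega) with ⟨k', hk', rfl, hgetj⟩ | ⟨m', hm', rfl, hgetj⟩
      · -- ear j is a tree 2-cycle
        rw [hgetj]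
        have : earEdgeSet (fT (t.get ⟨k', hk'⟩)) =
            {s((t.get ⟨k', hk'⟩).1, (t.get ⟨k', hk'⟩).2)} := earEdgeSet_twoCycle _ _
        rw [this, Set.disjoint_singleton_right]
        rcases Nat.eq_zero_or_pos i with rfl | hipos
        · have : ears.get ⟨0, hi⟩ = F := rfl
          rw [this]
          exact hTF k' hk'
        · rcases hsplit i hi hipos with ⟨k, hk, rfl, hgeti⟩ | ⟨m, hm, rfl, hgeti⟩
          · rw [hgeti]
            have h2 : earEdgeSet (fT (t.get ⟨k, hk⟩)) =
                {s((t.get ⟨k, hk⟩).1, (t.get ⟨k, hk⟩).2)} := earEdgeSet_twoCycle _ _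
            rw [h2, Set.mem_singleton_iff]
            exact fun h => hTT k k' hk hk' (by omega) h.symm
          · omega
      · -- ear j is a single extra edge
        rw [hgetj]
        have hje : earEdgeSet (fR (R.get ⟨m', hm'⟩)) =
            {s((R.get ⟨m', hm'⟩).1, (R.get ⟨m', hm'⟩).2)} := earEdgeSet_pair _ _
        rw [hje, Set.disjoint_singleton_right]
        have hRmem : R.get ⟨m', hm'⟩ ∈ R := List.get_mem _ _
        rcases Nat.eq_zero_or_pos i with rfl | hipos
        · have : ears.get ⟨0, hi⟩ = F := rfl
          rw [this]
          exact hRnewF _ hRmem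
        · rcases hsplit i hi hipos with ⟨k, hk, rfl, hgeti⟩ | ⟨m, hm, rfl, hgeti⟩
          · rw [hgeti, earEdgeSet_twoCycle, Set.mem_singleton_iff]
            exact fun h => hRnewT _ hRmem (t.get ⟨k, hk⟩) (List.get_mem _ _) h
          · rw [hgeti, earEdgeSet_pair, Set.mem_singleton_iff]
            intro h
            have hne : m ≠ m' := by omega
            have := List.Nodup.get_inj_iff hRnodup (i := ⟨m, by simpa using hm⟩)
              (j := ⟨m', by simpa using hm'⟩)
            simp only [List.get_eq_getElem, List.getElem_map] at this
            have heq : (⟨m, by simpa using hm⟩ : Fin (R.map fun p => s(p.1, p.2)).length) =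
                ⟨m', by simpa using hm'⟩ := this.1 h.symm
            exact hne (congrArg Fin.val heq)
    intro i j hi hj hij
    rcases Nat.lt_or_ge i j with h | h
    · exact key i j hi hj h
    · exact (key j i hj hi (by omega)).symm
  · -- edges_cover
    intro e
    constructor
    · intro he
      rcases hecov e he with h | ⟨q, hq, rfl⟩ | ⟨p, hp, rfl⟩
      · exact ⟨F, by simp [hears], h⟩
      · refine ⟨fT q, ?_, ?_⟩
        · simp only [hears, List.mem_cons, List.mem_append]
          exact Or.inr (Or.inl (List.mem_map.2 ⟨q, hq, rfl⟩))
        · rw [hfT]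
          show _ ∈ earEdgeSet [q.1, q.2, q.1]
          rw [earEdgeSet_twoCycle]
          rfl
      · refine ⟨fR p, ?_, ?_⟩
        · simp only [hears, List.mem_cons, List.mem_append]
          exact Or.inr (Or.inr (List.mem_map.2 ⟨p, hp, rfl⟩))
        · rw [hfR]
          show _ ∈ earEdgeSet [p.1, p.2]
          rw [earEdgeSet_pair]
          rfl
    · rintro ⟨L, hL, heL⟩
      rw [hears, List.mem_cons, List.mem_append] at hL
      rcases hL with rfl | hL | hL
      · exact earEdgeSet_subset_edgeSet hFc heL
      · obtain ⟨p, hp, rfl⟩ := List.mem_map.1 hL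
        obtain ⟨jf, hjf⟩ := List.mem_iff_get.1 hp
        have hadj : G.Adj p.1 p.2 := by rw [← hjf]; exact (hT jf jf.2).2.2
        rw [hfT, earEdgeSet_twoCycle, Set.mem_singleton_iff] at heL
        rw [heL]
        exact hadj
      · obtain ⟨p, hp, rfl⟩ := List.mem_map.1 hL
        rw [hfR, earEdgeSet_pair, Set.mem_singleton_iff] at heL
        rw [heL]
        exact hRadj p hp
  · -- count
    show (ears.filter (fun L => L.length % 2 == 1)).length ≤ 1 + t.length
    rw [hears, List.filter_cons, List.filter_append]
    have hNf : N.filter (fun L => L.length % 2 == 1) = [] := by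
      rw [List.filter_eq_nil_iff]
      intro L hL
      obtain ⟨p, hp, rfl⟩ := List.mem_map.1 hL
      simp [hfR]
    rw [hNf, List.append_nil]
    have := List.length_filter_le (fun L => L.length % 2 == 1) M
    by_cases hfF : (F.length % 2 == 1) = true <;> simp [hfF] <;> omega
end BuildDecomp

section Instantiate
variable [Fintype V] [DecidableEq V]

lemma sym2_out_eq (e : Sym2 V) : s((Quot.out e).1, (Quot.out e).2) = e := by
  have : ((Quot.out e).1, (Quot.out e).2) = Quot.out e := rfl
  show Quot.mk _ ((Quot.out e).1, (Quot.out e).2) = e; rw [this]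
  exact Quot.out_eq e

lemma exists_decomp_from_F (hconn : G.Connected)
    (F : List V) (hFc : List.Chain' G.Adj F) (hF : IsCycleEarList F) (hFne : F ≠ []) :
    ∃ E : GenEarDecomp G, evenEarCount E ≤ 1 + (Fintype.card V - F.toFinset.card) := by
  classical
  have hSne : F.toFinset.Nonempty := by
    rw [List.toFinset_nonempty_iff]
    exact hFne
  obtain ⟨t, hgood, hcov⟩ := exists_goodExt hconn F.toFinsetᶜ.card F.toFinset hSne le_rfl
  have hlen : Fintype.card V = F.toFinset.card + t.length := by
    rw [← goodExt_card t F.toFinset hgood, hcov, Finset.card_univ]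
  set Eset : Finset (Sym2 V) := Finset.univ.filter
    (fun e => e ∈ G.edgeSet ∧ e ∉ earEdgeSet F ∧ ∀ q ∈ t, e ≠ s(q.1, q.2)) with hEset
  set R : List (V × V) := Eset.toList.map Quot.out with hR
  have hmapR : R.map (fun p => s(p.1, p.2)) = Eset.toList := by
    rw [hR, List.map_map]
    have : ((fun p : V × V => s(p.1, p.2)) ∘ Quot.out) = (id : Sym2 V → Sym2 V) :=
      funext fun e => sym2_out_eq e
    rw [this, List.map_id]
  have hmemR : ∀ p ∈ R, ∃ e ∈ Eset, p = Quot.out e ∧ s(p.1, p.2) = e := by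
    intro p hp
    rw [hR, List.mem_map] at hp
    obtain ⟨e, he, rfl⟩ := hp
    exact ⟨e, Finset.mem_toList.1 he, rfl, sym2_out_eq e⟩
  have hEmem : ∀ e ∈ Eset, e ∈ G.edgeSet ∧ e ∉ earEdgeSet F ∧ ∀ q ∈ t, e ≠ s(q.1, q.2) := by
    intro e he
    rw [hEset, Finset.mem_filter] at he
    exact he.2
  obtain ⟨E, hE⟩ := build_decomp F t R hFc hF hgood hcov
    (by
      intro p hp
      obtain ⟨e, he, -, hse⟩ := hmemR p hp
      have := (hEmem e he).1
      rw [← hse] at this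
      exact this)
    (by rw [hmapR]; exact Eset.nodup_toList)
    (by
      intro p hp
      obtain ⟨e, he, -, hse⟩ := hmemR p hp
      rw [hse]
      exact (hEmem e he).2.1)
    (by
      intro p hp q hq
      obtain ⟨e, he, -, hse⟩ := hmemR p hp
      rw [hse]
      exact (hEmem e he).2.2 q hq)
    (by
      intro e he
      by_cases h1 : e ∈ earEdgeSet F
      · exact Or.inl h1
      by_cases h2 : ∃ q ∈ t, e = s(q.1, q.2)
      · exact Or.inr (Or.inl h2)
      refine Or.inr (Or.inr ⟨Quot.out e, ?_, (sym2_out_eq e).symm⟩)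
      rw [hR, List.mem_map]
      refine ⟨e, Finset.mem_toList.2 ?_, rfl⟩
      rw [hEset, Finset.mem_filter]
      exact ⟨Finset.mem_univ _, he, h1, fun q hq hqe => h2 ⟨q, hq, hqe⟩⟩)
  exact ⟨E, by omega⟩

lemma exists_adj_of_two_lt (hconn : G.Connected) (h2 : 2 ≤ Fintype.card V) :
    ∃ r b : V, G.Adj r b := by
  obtain ⟨x, y, hxy⟩ := Fintype.exists_pair_of_one_lt_card h2
  obtain ⟨w⟩ := hconn.preconnected x y
  cases w with
  | nil => exact absurd rfl hxy
  | cons h q => exact ⟨_, _, h⟩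

lemma exists_decomp_of_adj (hconn : G.Connected) {r b : V} (hrb : G.Adj r b) :
    Nonempty (GenEarDecomp G) := by
  obtain ⟨E, -⟩ := exists_decomp_from_F hconn [r, b, r]
    (by simp [List.Chain', List.isChain_cons_cons, hrb, hrb.symm])
    (Or.inr ⟨r, b, hrb.ne, rfl⟩) (by simp)
  exact ⟨E⟩

end Instantiate

lemma nodup_exists_ne {l : List V} (h2 : 2 ≤ l.length) (hn : l.Nodup) :
    ∃ x y : V, x ≠ y := by
  match l, h2 with
  | x :: y :: t, _ =>
    rw [List.nodup_cons] at hn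
    exact ⟨x, y, fun h => hn.1 (h ▸ List.mem_cons_self)⟩

lemma earList_exists_ne {L : List V} (h : IsEarList L) : ∃ x y : V, x ≠ y := by
  rcases h with ⟨hl, hn⟩ | ⟨hl, -, hn⟩ | ⟨v, w, hvw, -⟩
  · exact nodup_exists_ne hl hn
  · refine nodup_exists_ne ?_ hn
    have := @List.length_dropLast V L
    omega
  · exact ⟨v, w, hvw⟩

lemma decomp_empty [Fintype V] (h1 : Fintype.card V ≤ 1) (E : GenEarDecomp G) : False := by
  obtain ⟨L₀, rest, hE⟩ : ∃ L₀ rest, E.ears = L₀ :: rest := by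
    cases hEE : E.ears with
    | nil => exact absurd hEE E.ears_nonempty
    | cons L₀ rest => exact ⟨L₀, rest, rfl⟩
  obtain ⟨x, y, hxy⟩ := earList_exists_ne
    (E.shape L₀ (by rw [hE]; exact List.mem_cons_self))
  exact hxy (Fintype.card_le_one_iff.1 h1 x y)

lemma exists_decomp_of_cycle [Fintype V] [DecidableEq V] (hconn : G.Connected) {v : V}
    (c : G.Walk v v) (hc : c.IsCycle) :
    (∃ E : GenEarDecomp G, evenEarCount E ≤ Fintype.card V - 2) ∧ 3 ≤ Fintype.card V := by
  have h3 : 3 ≤ c.length := hc.three_le_length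
  have hsupp : c.support = v :: c.support.tail := c.support_eq_cons
  have hlsupp : c.support.length = c.length + 1 := c.length_support
  have htlen : c.support.tail.length = c.length := by
    rw [hsupp] at hlsupp
    simpa using hlsupp
  have htne : c.support.tail ≠ [] := by
    intro h
    rw [h] at htlen
    simp at htlen
    omega
  have htnodup : c.support.tail.Nodup := hc.support_nodup
  obtain ⟨y, w, hys⟩ : ∃ y w, c.support.tail = y :: w := by
    cases hts : c.support.tail with
    | nil => exact absurd hts htne
    | cons y w => exact ⟨y, w, rfl⟩
  have hglt2 : c.support.tail.getLast? = some v := by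
    have h1 : c.support.getLast? = some v := by
      rw [List.getLast?_eq_getLast c.support_ne_nil, c.getLast_support]
    rw [hsupp, hys, List.getLast?_cons_cons] at h1
    rw [hys]
    exact h1
  have hglt : c.support.tail.getLast htne = v := by
    rw [List.getLast?_eq_getLast htne, Option.some_inj] at hglt2
    exact hglt2
  have hvmem : v ∈ c.support.tail := List.mem_of_getLast? hglt2
  have hdl : c.support.dropLast = v :: c.support.tail.dropLast := by
    rw [hsupp, hys]
    rfl
  have hconc : c.support.tail.dropLast ++ [v] = c.support.tail := by
    have h := List.dropLast_concat_getLast htne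
    rw [hglt] at h
    exact h
  have hvnd : v ∉ c.support.tail.dropLast := by
    intro hmem
    rw [← hconc, List.nodup_append] at htnodup
    exact htnodup.2.2 v hmem v (List.mem_singleton_self v) rfl
  have hdlnodup : c.support.dropLast.Nodup := by
    rw [hdl, List.nodup_cons]
    exact ⟨hvnd, htnodup.sublist (List.dropLast_sublist _)⟩
  -- cardinality of the cycle support
  have hcardF : c.support.toFinset.card = c.length := by
    rw [hsupp, List.toFinset_cons, Finset.insert_eq_self.2 (List.mem_toFinset.2 hvmem),
      List.toFinset_card_of_nodup htnodup, htlen]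
  have hcardle : c.support.toFinset.card ≤ Fintype.card V := Finset.card_le_univ _
  have hhl : c.support.head? = c.support.getLast? := by
    rw [List.getLast?_eq_getLast c.support_ne_nil, c.getLast_support, hsupp, List.head?_cons]
  obtain ⟨E, hE⟩ := exists_decomp_from_F hconn c.support c.isChain_adj_support
    (Or.inl ⟨by rw [hlsupp]; omega, hhl, hdlnodup⟩) c.support_ne_nil
  refine ⟨⟨E, ?_⟩, by omega⟩
  rw [hcardF] at hE
  omega

end EarAux

/-- **Lemma.** For a connected graph `G`, `μ(G) ≤ v(G) − 1`, with equality iff `G` is a tree. -/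
theorem mu_le_card {V : Type} [Fintype V] (G : SimpleGraph V) (hconn : G.Connected) :
    muGraph G ≤ Nat.card V - 1 ∧ (muGraph G = Nat.card V - 1 ↔ G.IsTree) := by
  classical
  have hne : Nonempty V := hconn.nonempty
  have hcard : (Nat.card V) = Fintype.card V := Nat.card_eq_fintype_card
  have hpos : 1 ≤ Fintype.card V := Fintype.card_pos
  by_cases htree : G.IsTree
  · have hphi : phiGraph G = Fintype.card V - 1 := by
      rcases le_or_gt (Fintype.card V) 1 with h1 | h2
      · have hempty : {m | ∃ E : GenEarDecomp G, evenEarCount E = m} = ∅ :=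
          Set.eq_empty_iff_forall_notMem.2 fun m ⟨E, _⟩ => decomp_empty h1 E
        rw [phiGraph, hempty, Nat.sInf_empty]
        omega
      · obtain ⟨r, b, hrb⟩ := exists_adj_of_two_lt hconn h2
        obtain ⟨E₀⟩ := exists_decomp_of_adj hconn hrb
        have hset : {m | ∃ E : GenEarDecomp G, evenEarCount E = m} = {Fintype.card V - 1} := by
          ext m
          constructor
          · rintro ⟨E, rfl⟩
            exact tree_count htree E
          · rintro rfl
            exact ⟨E₀, tree_count htree E₀⟩
        rw [phiGraph, hset, csInf_singleton]
    have hmu : muGraph G = Nat.card V - 1 := by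
      rw [muGraph, hphi, hcard]
      omega
    exact ⟨hmu.le, ⟨fun _ => htree, fun _ => hmu⟩⟩
  · have hnoac : ¬ G.IsAcyclic := fun hac => htree ⟨hconn, hac⟩
    rw [SimpleGraph.IsAcyclic] at hnoac
    push_neg at hnoac
    obtain ⟨v, c, hc⟩ := hnoac
    obtain ⟨⟨E, hE⟩, h3⟩ := exists_decomp_of_cycle hconn c hc
    have hphile : phiGraph G ≤ Fintype.card V - 2 :=
      le_trans (Nat.sInf_le ⟨E, rfl⟩) hE
    have hmule : muGraph G ≤ Nat.card V - 2 := by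
      rw [muGraph, hcard]
      omega
    refine ⟨by omega, ⟨fun hmu => absurd hmu (by omega), fun ht => absurd ht htree⟩⟩
end
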